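/- Let n, v be unit vectors in ℝ^D with ⟨n,v⟩ = cos φ > 0, let K be a symmetric positive-definite operator on 𝒯 = n^⊥ with eigenvalues in [κ_min, κ_max] (0 < κ_min ≤ κ_max), and let Θ = ⟨n,v⟩ V* K V where V : v^⊥ → n^⊥, V dv = dv − (⟨dv,n⟩/⟨n,v⟩)v, and V* : n^⊥ → v^⊥, V* dq = dq − (⟨dq,v⟩/⟨n,v⟩)n. Then κ_min cos φ ≤ ‖Θ‖ ≤ κ_max / cos φ, where ‖·‖ is the operator norm. -/

import Mathlib

open scoped RealInnerProductSpace

/-- The projection V : v^⊥ → n^⊥ along v. -/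
noncomputable def projV {D : ℕ} (n v dv : EuclideanSpace ℝ (Fin D)) :
    EuclideanSpace ℝ (Fin D) :=
  dv - (⟪dv, n⟫ / ⟪n, v⟫) • v

/-- The projection V* : n^⊥ → v^⊥ along n. -/
noncomputable def projVStar {D : ℕ} (n v dq : EuclideanSpace ℝ (Fin D)) :
    EuclideanSpace ℝ (Fin D) :=
  dq - (⟪dq, v⟫ / ⟪n, v⟫) • n

/-- The collision operator Θ = ⟨n,v⟩ V* K V. -/
noncomputable def collisionOp {D : ℕ} (n v : EuclideanSpace ℝ (Fin D))
    (K : EuclideanSpace ℝ (Fin D) →ₗ[ℝ] EuclideanSpace ℝ (Fin D))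
    (dv : EuclideanSpace ℝ (Fin D)) : EuclideanSpace ℝ (Fin D) :=
  ⟪n, v⟫ • projVStar n v (K (projV n v dv))

private lemma sq_le_imp_aux {a b : ℝ} (ha : 0 ≤ a) (hb : 0 ≤ b) (h : a ^ 2 ≤ b ^ 2) :
    a ≤ b := by nlinarith

/-- if K is symmetric positive definite on n^⊥ with eigenvalues
in [κ_min, κ_max], then the collision operator Θ = ⟨n,v⟩ V* K V satisfies
κ_min cos φ ≤ ‖Θ‖ ≤ κ_max / cos φ, where cos φ = ⟨n,v⟩ > 0. -/
theorem stmt_17 {D : ℕ} (n v : EuclideanSpace ℝ (Fin D))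
    (hn : ‖n‖ = 1) (hv : ‖v‖ = 1) (hcos : 0 < ⟪n, v⟫)
    (K : EuclideanSpace ℝ (Fin D) →ₗ[ℝ] EuclideanSpace ℝ (Fin D))
    (κmin κmax : ℝ) (hκ : 0 < κmin) (hκ' : κmin ≤ κmax)
    (hsymm : ∀ x y, ⟪K x, y⟫ = ⟪x, K y⟫)
    (hKtang : ∀ x, ⟪x, n⟫ = 0 → ⟪K x, n⟫ = 0)
    (hbounds : ∀ x, ⟪x, n⟫ = 0 →
      κmin * ‖x‖ ^ 2 ≤ ⟪K x, x⟫ ∧ ⟪K x, x⟫ ≤ κmax * ‖x‖ ^ 2) :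
    ∀ dv, ⟪dv, v⟫ = 0 →
      κmin * ⟪n, v⟫ * ‖dv‖ ≤ ‖collisionOp n v K dv‖ ∧
      ‖collisionOp n v K dv‖ ≤ (κmax / ⟪n, v⟫) * ‖dv‖ := by
  intro dv hdv
  set c : ℝ := ⟪n, v⟫ with hc
  have hc1 : c ≤ 1 := by
    have h := real_inner_le_norm n v
    rw [hn, hv, mul_one] at h
    exact h
  have hc0 : c ≠ 0 := ne_of_gt hcos
  have hvn : ⟪v, n⟫ = c := by rw [real_inner_comm]
  set x : EuclideanSpace ℝ (Fin D) := projV n v dv with hx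
  have hxdef : x = dv - (⟪dv, n⟫ / c) • v := rfl
  set y : EuclideanSpace ℝ (Fin D) := K x with hy
  set b : ℝ := ⟪y, v⟫ with hb
  have hTheta : collisionOp n v K dv = c • (y - (b / c) • n) := rfl
  clear_value b y x c
  have hxn : ⟪x, n⟫ = 0 := by
    rw [hxdef, inner_sub_left, real_inner_smul_left, hvn]
    field_simp
    ring
  have hnormx : ‖x‖ ^ 2 = ‖dv‖ ^ 2 + (⟪dv, n⟫ / c) ^ 2 := by
    have h1 : ‖dv - (⟪dv, n⟫ / c) • v‖ ^ 2
        = ‖dv‖ ^ 2 - 2 * ⟪dv, (⟪dv, n⟫ / c) • v⟫ + ‖(⟪dv, n⟫ / c) • v‖ ^ 2 :=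
      norm_sub_sq_real dv _
    rw [real_inner_smul_right, hdv, norm_smul, hv, Real.norm_eq_abs] at h1
    rw [hxdef, h1, mul_one, sq_abs]
    ring
  have ha2 : ⟪dv, n⟫ ^ 2 ≤ ‖dv‖ ^ 2 * (1 - c ^ 2) := by
    have hw : ⟪dv, n - c • v⟫ = ⟪dv, n⟫ := by
      rw [inner_sub_right, real_inner_smul_right, hdv]; ring
    have hwn : ‖n - c • v‖ ^ 2 = 1 - c ^ 2 := by
      have h2 : ‖n - c • v‖ ^ 2 = ‖n‖ ^ 2 - 2 * ⟪n, c • v⟫ + ‖c • v‖ ^ 2 :=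
        norm_sub_sq_real n _
      rw [real_inner_smul_right, ← hc, norm_smul, hv, Real.norm_eq_abs] at h2
      rw [h2, hn, mul_one, sq_abs]; ring
    have hCS := real_inner_mul_inner_self_le dv (n - c • v)
    rw [hw, real_inner_self_eq_norm_sq, real_inner_self_eq_norm_sq, hwn] at hCS
    rw [pow_two]
    exact hCS
  have hx_ge : ‖dv‖ ^ 2 ≤ ‖x‖ ^ 2 := by
    rw [hnormx]; linarith [sq_nonneg (⟪dv, n⟫ / c)]
  have hx_le : ‖x‖ ^ 2 ≤ ‖dv‖ ^ 2 / c ^ 2 := by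
    rw [le_div_iff₀ (by positivity : (0:ℝ) < c ^ 2), hnormx]
    have hq : (‖dv‖ ^ 2 + (⟪dv, n⟫ / c) ^ 2) * c ^ 2 = ‖dv‖ ^ 2 * c ^ 2 + ⟪dv, n⟫ ^ 2 := by
      field_simp
    rw [hq]
    linarith [ha2]
  have hyn : ⟪y, n⟫ = 0 := by rw [hy]; exact hKtang x hxn
  have hKyx : ⟪K y, x⟫ = ⟪K x, y⟫ := by rw [hsymm, real_inner_comm]
  have hCSK : ⟪K x, y⟫ ^ 2 ≤ ⟪K x, x⟫ * ⟪K y, y⟫ := by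
    have key : ∀ t : ℝ, 0 ≤ ⟪K y, y⟫ * (t * t) + (2 * ⟪K x, y⟫) * t + ⟪K x, x⟫ := by
      intro t
      have hz : ⟪x + t • y, n⟫ = 0 := by
        rw [inner_add_left, real_inner_smul_left, hxn, hyn]; ring
      have h0 := (hbounds _ hz).1
      have hpos : (0:ℝ) ≤ ⟪K (x + t • y), x + t • y⟫ := le_trans (by positivity) h0
      have hexp : ⟪K (x + t • y), x + t • y⟫
          = ⟪K y, y⟫ * (t * t) + (2 * ⟪K x, y⟫) * t + ⟪K x, x⟫ := by
        rw [map_add, map_smul, inner_add_left, inner_add_right, inner_add_right,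
          real_inner_smul_left, real_inner_smul_right, real_inner_smul_right,
          real_inner_smul_left, hKyx]
        ring
      linarith [hexp ▸ hpos]
    have hd := discrim_le_zero key
    simp only [discrim] at hd
    linarith
  have hKxx_ub : ⟪K x, x⟫ ≤ κmax * ‖x‖ ^ 2 := (hbounds x hxn).2
  have hKyy_ub : ⟪K y, y⟫ ≤ κmax * ‖y‖ ^ 2 := (hbounds y hyn).2
  have hKxx_lb : κmin * ‖x‖ ^ 2 ≤ ⟪K x, x⟫ := (hbounds x hxn).1
  have hKyy_lb : κmin * ‖y‖ ^ 2 ≤ ⟪K y, y⟫ := (hbounds y hyn).1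
  have hKyy0 : (0:ℝ) ≤ ⟪K y, y⟫ := le_trans (by positivity) hKyy_lb
  have hKxy : ⟪K x, y⟫ = ‖y‖ ^ 2 := by rw [hy, real_inner_self_eq_norm_sq]
  have hκmax : 0 < κmax := lt_of_lt_of_le hκ hκ'
  have hy_ub : ‖y‖ ≤ κmax * ‖x‖ := by
    rcases eq_or_ne ‖y‖ 0 with h0 | h0
    · rw [h0]; positivity
    · have hy0 : 0 < ‖y‖ := lt_of_le_of_ne (norm_nonneg _) (Ne.symm h0)
      rw [hKxy] at hCSK
      have h4 : (‖y‖ ^ 2) ^ 2 ≤ (κmax * ‖x‖ ^ 2) * (κmax * ‖y‖ ^ 2) :=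
        le_trans hCSK (mul_le_mul hKxx_ub hKyy_ub hKyy0 (by positivity))
      have h5 : ‖y‖ ^ 2 * ‖y‖ ^ 2 ≤ (κmax ^ 2 * ‖x‖ ^ 2) * ‖y‖ ^ 2 := by linarith
      have h6 : ‖y‖ ^ 2 ≤ κmax ^ 2 * ‖x‖ ^ 2 := le_of_mul_le_mul_right h5 (pow_pos hy0 2)
      apply sq_le_imp_aux (norm_nonneg _) (by positivity)
      rw [mul_pow]
      exact h6
  have hy_lb : κmin * ‖x‖ ≤ ‖y‖ := by
    have hCS := real_inner_le_norm y x
    have hyx : ⟪K x, x⟫ = ⟪y, x⟫ := by rw [hy]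
    rcases eq_or_ne ‖x‖ 0 with h0 | h0
    · rw [h0]; simpa using norm_nonneg y
    · have hx0 : 0 < ‖x‖ := lt_of_le_of_ne (norm_nonneg _) (Ne.symm h0)
      have h5 : (κmin * ‖x‖) * ‖x‖ ≤ ‖y‖ * ‖x‖ := by
        rw [hyx] at hKxx_lb
        have := le_trans hKxx_lb hCS
        linarith [this]
      exact le_of_mul_le_mul_right h5 hx0
  have hPV : ‖y - (b / c) • n‖ ^ 2 = ‖y‖ ^ 2 + (b / c) ^ 2 := by
    have h1 : ‖y - (b / c) • n‖ ^ 2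
        = ‖y‖ ^ 2 - 2 * ⟪y, (b / c) • n⟫ + ‖(b / c) • n‖ ^ 2 := norm_sub_sq_real y _
    rw [real_inner_smul_right, hyn, norm_smul, hn, Real.norm_eq_abs] at h1
    rw [h1, mul_one, sq_abs]; ring
  have hb2 : b ^ 2 ≤ ‖y‖ ^ 2 * (1 - c ^ 2) := by
    have hw : ⟪y, v - c • n⟫ = b := by
      rw [inner_sub_right, real_inner_smul_right, hyn, ← hb]; ring
    have hwn : ‖v - c • n‖ ^ 2 = 1 - c ^ 2 := by
      have h2 : ‖v - c • n‖ ^ 2 = ‖v‖ ^ 2 - 2 * ⟪v, c • n⟫ + ‖c • n‖ ^ 2 :=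
        norm_sub_sq_real v _
      rw [real_inner_smul_right, hvn, norm_smul, hn, Real.norm_eq_abs] at h2
      rw [h2, hv, mul_one, sq_abs]; ring
    have hCS := real_inner_mul_inner_self_le y (v - c • n)
    rw [hw, real_inner_self_eq_norm_sq, real_inner_self_eq_norm_sq, hwn] at hCS
    rw [pow_two]
    exact hCS
  have hTn : ‖collisionOp n v K dv‖ ^ 2 = c ^ 2 * ‖y‖ ^ 2 + b ^ 2 := by
    rw [hTheta, norm_smul, Real.norm_eq_abs, abs_of_pos hcos, mul_pow, hPV]
    field_simp
  constructor
  · apply sq_le_imp_aux (by positivity) (norm_nonneg _)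
    rw [hTn]
    have h0 : (0:ℝ) ≤ κmin * ‖x‖ := by positivity
    have p1 : κmin ^ 2 * ‖dv‖ ^ 2 ≤ κmin ^ 2 * ‖x‖ ^ 2 :=
      mul_le_mul_of_nonneg_left hx_ge (sq_nonneg κmin)
    have p2 : (κmin * ‖x‖) ^ 2 ≤ ‖y‖ ^ 2 := pow_le_pow_left₀ h0 hy_lb 2
    have p3 : c ^ 2 * (κmin * ‖x‖) ^ 2 ≤ c ^ 2 * ‖y‖ ^ 2 :=
      mul_le_mul_of_nonneg_left p2 (sq_nonneg c)
    have p4 : c ^ 2 * (κmin ^ 2 * ‖dv‖ ^ 2) ≤ c ^ 2 * (κmin ^ 2 * ‖x‖ ^ 2) :=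
      mul_le_mul_of_nonneg_left p1 (sq_nonneg c)
    have hexpand : (κmin * c * ‖dv‖) ^ 2 = c ^ 2 * (κmin ^ 2 * ‖dv‖ ^ 2) := by ring
    rw [hexpand]
    have hexpand2 : c ^ 2 * (κmin * ‖x‖) ^ 2 = c ^ 2 * (κmin ^ 2 * ‖x‖ ^ 2) := by ring
    linarith [sq_nonneg b]
  · apply sq_le_imp_aux (norm_nonneg _) (by positivity)
    rw [hTn]
    have h2 : ‖y‖ ^ 2 ≤ (κmax * ‖x‖) ^ 2 := pow_le_pow_left₀ (norm_nonneg y) hy_ub 2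
    have h3 : κmax ^ 2 * ‖x‖ ^ 2 ≤ κmax ^ 2 * (‖dv‖ ^ 2 / c ^ 2) :=
      mul_le_mul_of_nonneg_left hx_le (sq_nonneg κmax)
    have h1 : c ^ 2 * ‖y‖ ^ 2 + b ^ 2 ≤ ‖y‖ ^ 2 := by linarith [hb2]
    have h4 : (κmax / c * ‖dv‖) ^ 2 = κmax ^ 2 * (‖dv‖ ^ 2 / c ^ 2) := by
      field_simp
    have h2' : ‖y‖ ^ 2 ≤ κmax ^ 2 * ‖x‖ ^ 2 := by linarith [h2]
    rw [h4]
    linarith
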